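/- For the path with vertices v_1,...,v_{m+1} (m ≥ 2) and edge set {v_i v_{i+2} : 1 ≤ i ≤ m-1} ∪ {v_m v_{m+1}}, the labeling f(v_i v_{i+2}) = i for 1 ≤ i ≤ m-1 and f(v_m v_{m+1}) = m induces vertex sums f⁺(v_1) = 1, f⁺(v_2) = 2, f⁺(v_i) = 2i-2 for 3 ≤ i ≤ m, and f⁺(v_{m+1}) = 2m-1; in particular these sums are strictly increasing in i. -/

import Mathlib

open Finset SimpleGraph

open scoped Classical in
/-- The sum of the labels of all edges incident to `v`. -/
noncomputable def vertexSum {V : Type*} [Fintype V] (G : SimpleGraph V)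
    (f : Sym2 V → ℕ) (v : V) : ℕ :=
  ∑ w ∈ Finset.univ.filter (fun w => G.Adj v w), f s(v, w)

/-- The path on vertices `v_1, …, v_{m+1}` (0-based: `0, …, m`) with edge set
`{v_i v_{i+2} : 1 ≤ i ≤ m-1} ∪ {v_m v_{m+1}}`. -/
def reindexedPath (m : ℕ) : SimpleGraph (Fin (m + 1)) :=
  SimpleGraph.fromRel (fun a b => (a : ℕ) + 2 = (b : ℕ) ∨ ((a : ℕ) = m - 1 ∧ (b : ℕ) = m))

open scoped Classical in
lemma vertexSum_eq_of_nbhd {V : Type*} [Fintype V] (G : SimpleGraph V)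
    (f : Sym2 V → ℕ) (v : V) (s : Finset V) (h : ∀ w, G.Adj v w ↔ w ∈ s) :
    vertexSum G f v = ∑ w ∈ s, f s(v, w) := by
  unfold vertexSum
  congr 1
  ext w
  simp [h]

set_option maxHeartbeats 1000000 in
/-- For the path with edge set `{v_i v_{i+2} : 1 ≤ i ≤ m-1} ∪ {v_m v_{m+1}}` (`m ≥ 2`),
the labeling `f(v_i v_{i+2}) = i`, `f(v_m v_{m+1}) = m` induces vertex sums
`f⁺(v_1) = 1`, `f⁺(v_2) = 2`, `f⁺(v_i) = 2i - 2` for `3 ≤ i ≤ m`, and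
`f⁺(v_{m+1}) = 2m - 1`; in particular the sums are strictly increasing in `i`. -/
theorem reindexedPath_labeling_sums (m : ℕ) (hm : 2 ≤ m)
    (f : Sym2 (Fin (m + 1)) → ℕ)
    (hf1 : ∀ i : ℕ, ∀ _h1 : 1 ≤ i, ∀ _h2 : i ≤ m - 1,
      f s((⟨i - 1, by omega⟩ : Fin (m + 1)), (⟨i + 1, by omega⟩ : Fin (m + 1))) = i)
    (hf2 : f s((⟨m - 1, by omega⟩ : Fin (m + 1)), (⟨m, by omega⟩ : Fin (m + 1))) = m) :
    vertexSum (reindexedPath m) f ⟨0, by omega⟩ = 1 ∧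
    vertexSum (reindexedPath m) f ⟨1, by omega⟩ = 2 ∧
    (∀ i : ℕ, ∀ _h3 : 3 ≤ i, ∀ _h4 : i ≤ m,
      vertexSum (reindexedPath m) f ⟨i - 1, by omega⟩ = 2 * i - 2) ∧
    vertexSum (reindexedPath m) f ⟨m, by omega⟩ = 2 * m - 1 ∧
    StrictMono (vertexSum (reindexedPath m) f) := by
  have hf1' : ∀ a : ℕ, ∀ _h : a + 2 ≤ m,
      f s((⟨a, by omega⟩ : Fin (m + 1)), (⟨a + 2, by omega⟩ : Fin (m + 1))) = a + 1 := by
    intro a h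
    have h2 := hf1 (a + 1) (by omega) (by omega)
    convert h2 using 3
    all_goals simp
  have key : ∀ j : ℕ, ∀ hj : j ≤ m,
      vertexSum (reindexedPath m) f ⟨j, by omega⟩ =
        if j = 0 then 1 else if j = 1 then 2 else if j = m then 2 * m - 1 else 2 * j := by
    intro j hj
    rcases eq_or_ne j 0 with rfl | hj0
    · -- vertex 0, unique neighbor 2
      rw [if_pos rfl]
      rw [vertexSum_eq_of_nbhd _ f _ ({⟨2, by omega⟩} : Finset (Fin (m + 1)))
          (by
            intro w
            obtain ⟨w, hw⟩ := w
            simp [reindexedPath, SimpleGraph.fromRel_adj, Fin.ext_iff]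
            omega),
        Finset.sum_singleton]
      exact hf1' 0 (by omega)
    rcases eq_or_ne j 1 with rfl | hj1
    · rw [if_neg (by omega), if_pos rfl]
      rcases eq_or_ne m 2 with rfl | hm2
      · -- m = 2 : vertex 1 = m-1, unique neighbor m = 2
        rw [vertexSum_eq_of_nbhd _ f _ ({⟨2, by omega⟩} : Finset (Fin (2 + 1)))
            (by
              intro w
              obtain ⟨w, hw⟩ := w
              simp [reindexedPath, SimpleGraph.fromRel_adj, Fin.ext_iff]
              omega),
          Finset.sum_singleton]
        exact hf2
      · -- m ≥ 3 : vertex 1, unique neighbor 3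
        rw [vertexSum_eq_of_nbhd _ f _ ({⟨3, by omega⟩} : Finset (Fin (m + 1)))
            (by
              intro w
              obtain ⟨w, hw⟩ := w
              simp [reindexedPath, SimpleGraph.fromRel_adj, Fin.ext_iff]
              omega),
          Finset.sum_singleton]
        exact hf1' 1 (by omega)
    rcases eq_or_ne j m with hjm | hjm
    · -- vertex m, neighbors m-2 and m-1
      obtain ⟨a, rfl⟩ : ∃ a, m = a + 2 := ⟨m - 2, by omega⟩
      obtain rfl : j = a + 2 := hjm
      rw [if_neg hj0, if_neg hj1, if_pos rfl]
      rw [vertexSum_eq_of_nbhd _ f _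
          ({⟨a, by omega⟩, ⟨a + 1, by omega⟩} : Finset (Fin (a + 2 + 1)))
          (by
            intro w
            obtain ⟨w, hw⟩ := w
            simp [reindexedPath, SimpleGraph.fromRel_adj, Fin.ext_iff]
            omega),
        Finset.sum_pair (by simp [Fin.ext_iff])]
      have e1 : f s((⟨a + 2, by omega⟩ : Fin (a + 2 + 1)), ⟨a, by omega⟩) = a + 1 := by
        rw [Sym2.eq_swap]; exact hf1' a (by omega)
      have e2 : f s((⟨a + 2, by omega⟩ : Fin (a + 2 + 1)), ⟨a + 1, by omega⟩) = a + 2 := by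
        rw [Sym2.eq_swap]; exact hf2
      rw [e1, e2]
      omega
    rcases eq_or_ne j (m - 1) with hjm1 | hjm1
    · -- vertex m-1 (m ≥ 3 here), neighbors m-3 and m
      rw [if_neg hj0, if_neg hj1, if_neg hjm]
      obtain ⟨a, rfl⟩ : ∃ a, m = a + 3 := ⟨m - 3, by omega⟩
      obtain rfl : j = a + 2 := by omega
      rw [vertexSum_eq_of_nbhd _ f _
          ({⟨a, by omega⟩, ⟨a + 3, by omega⟩} : Finset (Fin (a + 3 + 1)))
          (by
            intro w
            obtain ⟨w, hw⟩ := w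
            simp [reindexedPath, SimpleGraph.fromRel_adj, Fin.ext_iff]
            omega),
        Finset.sum_pair (by simp [Fin.ext_iff])]
      have e1 : f s((⟨a + 2, by omega⟩ : Fin (a + 3 + 1)), ⟨a, by omega⟩) = a + 1 := by
        rw [Sym2.eq_swap]; exact hf1' a (by omega)
      have e2 : f s((⟨a + 2, by omega⟩ : Fin (a + 3 + 1)), ⟨a + 3, by omega⟩) = a + 3 :=
        hf2
      rw [e1, e2]
      omega
    · -- interior vertex j with 2 ≤ j ≤ m-2, neighbors j-2 and j+2
      rw [if_neg hj0, if_neg hj1, if_neg hjm]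
      obtain ⟨a, rfl⟩ : ∃ a, j = a + 2 := ⟨j - 2, by omega⟩
      rw [vertexSum_eq_of_nbhd _ f _
          ({⟨a, by omega⟩, ⟨a + 4, by omega⟩} : Finset (Fin (m + 1)))
          (by
            intro w
            obtain ⟨w, hw⟩ := w
            simp [reindexedPath, SimpleGraph.fromRel_adj, Fin.ext_iff]
            omega),
        Finset.sum_pair (by simp [Fin.ext_iff])]
      have e1 : f s((⟨a + 2, by omega⟩ : Fin (m + 1)), ⟨a, by omega⟩) = a + 1 := by
        rw [Sym2.eq_swap]; exact hf1' a (by omega)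
      have e2 : f s((⟨a + 2, by omega⟩ : Fin (m + 1)), ⟨a + 4, by omega⟩) = a + 3 :=
        hf1' (a + 2) (by omega)
      rw [e1, e2]
      omega
  refine ⟨?_, ?_, ?_, ?_, ?_⟩
  · have h := key 0 (by omega)
    rw [if_pos rfl] at h
    exact h
  · have h := key 1 (by omega)
    rw [if_neg (by omega), if_pos rfl] at h
    exact h
  · intro i h3 h4
    have h := key (i - 1) (by omega)
    rw [if_neg (by omega), if_neg (by omega), if_neg (by omega)] at h
    exact h.trans (by omega)
  · have h := key m le_rfl
    rw [if_neg (by omega), if_neg (by omega), if_pos rfl] at h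
    exact h
  · intro a b hab
    have ha := key a.val (by omega)
    have hb := key b.val (by omega)
    simp only [Fin.eta] at ha hb
    rw [ha, hb]
    have hab' : (a : ℕ) < (b : ℕ) := hab
    have hbm : (b : ℕ) ≤ m := by omega
    split_ifs <;> omega
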